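/- Let U ⊂ ℝ^k be convex and compact with 0 ∈ relint(U), and let {v^1, …, v^ℓ} be a basis of the linear hull lin(U) of U. Let D ∈ ℝ^{n×k} and r ∈ ℝ^n be such that z(u) = Du + r satisfies z(u) ≥ 0 and M z(u) + q + T u ≥ 0 for all u ∈ U, and define I := {i ∈ {1,…,n} : r_i > 0}. Then (D, r) is an AAR solution of the uncertain LCP(q, M, T, U) if and only if D and r satisfy M_{I,·} r + q_I = 0 and (M_{I,·} D + T_{I,·}) v^j = 0 for all j ∈ {1,…,ℓ}. -/

import Mathlib

open Matrix

/-- `(D, r)` is an affinely adjustable robust (AAR) solution of the uncertain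
LCP(q, M, T, U): for every `u ∈ U`, the point `z(u) = Du + r` satisfies
`z(u) ≥ 0`, `M z(u) + q + T u ≥ 0`, and `z(u)ᵀ (M z(u) + q + T u) = 0`. -/
def IsAARSolution {n k : ℕ} (M : Matrix (Fin n) (Fin n) ℝ) (q : Fin n → ℝ)
    (T : Matrix (Fin n) (Fin k) ℝ) (U : Set (Fin k → ℝ))
    (D : Matrix (Fin n) (Fin k) ℝ) (r : Fin n → ℝ) : Prop :=
  ∀ u ∈ U,
    (∀ i, 0 ≤ (D.mulVec u + r) i) ∧
    (∀ i, 0 ≤ (M.mulVec (D.mulVec u + r) + q + T.mulVec u) i) ∧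
    (D.mulVec u + r) ⬝ᵥ (M.mulVec (D.mulVec u + r) + q + T.mulVec u) = 0

lemma neg_smul_mem_of_intrinsicInterior {k : ℕ} {U : Set (Fin k → ℝ)}
    (h0 : (0 : Fin k → ℝ) ∈ intrinsicInterior ℝ U) {u : Fin k → ℝ} (hu : u ∈ U) :
    ∃ ε : ℝ, 0 < ε ∧ (-ε) • u ∈ U := by
  obtain ⟨y, hy, hy0⟩ := mem_intrinsicInterior.mp h0
  have h0U : (0 : Fin k → ℝ) ∈ U := intrinsicInterior_subset h0
  have h0S : (0 : Fin k → ℝ) ∈ affineSpan ℝ U := subset_affineSpan ℝ U h0U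
  have huS : u ∈ affineSpan ℝ U := subset_affineSpan ℝ U hu
  have hdir : u ∈ (affineSpan ℝ U).direction := by
    simpa using AffineSubspace.vsub_mem_direction huS h0S
  have hmem : ∀ t : ℝ, (-t) • u ∈ affineSpan ℝ U := by
    intro t
    have := AffineSubspace.vadd_mem_of_mem_direction
      (Submodule.smul_mem _ (-t) hdir) h0S
    simpa using this
  set f : ℝ → affineSpan ℝ U := fun t => ⟨(-t) • u, hmem t⟩ with hf_def
  have hf : Continuous f := by
    apply Continuous.subtype_mk
    exact continuous_neg.smul continuous_const
  have hf0 : f 0 = y := by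
    apply Subtype.ext
    simp [hf_def, hy0]
  have hnh : f ⁻¹' (interior ((↑) ⁻¹' U : Set (affineSpan ℝ U))) ∈ nhds (0 : ℝ) := by
    apply hf.continuousAt.preimage_mem_nhds
    exact isOpen_interior.mem_nhds (hf0 ▸ hy)
  obtain ⟨δ, hδ, hball⟩ := Metric.mem_nhds_iff.mp hnh
  refine ⟨δ/2, by positivity, ?_⟩
  have : f (δ/2) ∈ interior ((↑) ⁻¹' U : Set (affineSpan ℝ U)) := by
    apply hball
    simp only [Metric.mem_ball, Real.dist_eq, sub_zero]
    rw [abs_of_pos (by positivity)]; linarith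
  have := interior_subset this
  simpa [hf_def] using this

lemma dot_eq_zero_terms {n : ℕ} {a b : Fin n → ℝ} (ha : ∀ i, 0 ≤ a i)
    (hb : ∀ i, 0 ≤ b i) (hab : a ⬝ᵥ b = 0) : ∀ i, a i * b i = 0 := by
  intro i
  have := (Finset.sum_eq_zero_iff_of_nonneg (fun j _ => mul_nonneg (ha j) (hb j))).mp hab
  exact this i (Finset.mem_univ i)

theorem aar_characterization {n k ℓ : ℕ}
    (M : Matrix (Fin n) (Fin n) ℝ) (q : Fin n → ℝ) (T : Matrix (Fin n) (Fin k) ℝ)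
    (U : Set (Fin k → ℝ)) (hUconv : Convex ℝ U) (hUcomp : IsCompact U)
    (h0 : (0 : Fin k → ℝ) ∈ intrinsicInterior ℝ U)
    (v : Fin ℓ → (Fin k → ℝ)) (hv_li : LinearIndependent ℝ v)
    (hv_span : Submodule.span ℝ (Set.range v) = Submodule.span ℝ U)
    (D : Matrix (Fin n) (Fin k) ℝ) (r : Fin n → ℝ)
    (hz_nonneg : ∀ u ∈ U, ∀ i, 0 ≤ (D.mulVec u + r) i)
    (hw_nonneg : ∀ u ∈ U, ∀ i, 0 ≤ (M.mulVec (D.mulVec u + r) + q + T.mulVec u) i) :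
    IsAARSolution M q T U D r ↔
      ((∀ i, 0 < r i → M.mulVec r i + q i = 0) ∧
        (∀ j : Fin ℓ, ∀ i, 0 < r i → (M * D + T).mulVec (v j) i = 0)) := by
  have h0U : (0 : Fin k → ℝ) ∈ U := intrinsicInterior_subset h0
  constructor
  · intro hA
    -- part 1
    have hz0 : ∀ i, 0 ≤ r i := by
      intro i; have := hz_nonneg 0 h0U i; simpa using this
    have h1 : ∀ i, 0 < r i → M.mulVec r i + q i = 0 := by
      intro i hri
      obtain ⟨ha, hb, hc⟩ := hA 0 h0U
      have hterm := dot_eq_zero_terms ha hb hc i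
      simp only [Matrix.mulVec_zero, add_zero, zero_add, Pi.add_apply, Pi.zero_apply] at hterm
      have : M.mulVec r i + q i = 0 := by
        rcases mul_eq_zero.mp hterm with h | h
        · exact absurd h hri.ne'
        · simpa using h
      exact this
    refine ⟨h1, ?_⟩
    -- key claim on U
    have hclaim : ∀ u ∈ U, ∀ i, 0 < r i → (M * D + T).mulVec u i = 0 := by
      intro u hu i hri
      set c : ℝ := (D.mulVec u) i with hc
      set t : ℝ := min 1 (r i / (|c| + 1)) with ht
      have ht0 : 0 < t := lt_min one_pos (by positivity)
      have ht1 : t ≤ 1 := min_le_left _ _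
      have htc : t * |c| < r i := by
        have h2 : t ≤ r i / (|c| + 1) := min_le_right _ _
        have : t * |c| ≤ (r i / (|c| + 1)) * |c| :=
          mul_le_mul_of_nonneg_right h2 (abs_nonneg c)
        have hlt : (r i / (|c| + 1)) * |c| < r i := by
          rw [div_mul_eq_mul_div, div_lt_iff₀ (by positivity)]
          nlinarith [abs_nonneg c]
        linarith
      have htu : t • u ∈ U := by
        have := hUconv h0U hu (by linarith : (0:ℝ) ≤ 1 - t) ht0.le (by ring)
        simpa using this
      obtain ⟨ha, hb, hcc⟩ := hA (t • u) htu
      have hterm := dot_eq_zero_terms ha hb hcc i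
      have hzpos : 0 < (D.mulVec (t • u) + r) i := by
        have : (D.mulVec (t • u) + r) i = t * c + r i := by
          simp [Matrix.mulVec_smul, hc]
        rw [this]
        have := neg_abs_le c
        nlinarith [le_abs_self c]
      have hw0 : (M.mulVec (D.mulVec (t • u) + r) + q + T.mulVec (t • u)) i = 0 := by
        rcases mul_eq_zero.mp hterm with h | h
        · exact absurd h hzpos.ne'
        · exact h
      have hexp : (M.mulVec (D.mulVec (t • u) + r) + q + T.mulVec (t • u)) i
          = t * ((M * D + T).mulVec u i) + (M.mulVec r i + q i) := by
        simp [Matrix.mulVec_add, Matrix.mulVec_smul, Matrix.add_mulVec,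
          ← Matrix.mulVec_mulVec, smul_eq_mul]
        ring
      rw [hexp, h1 i hri, add_zero] at hw0
      exact (mul_eq_zero.mp hw0).resolve_left ht0.ne'
    intro j i hri
    have hvj : v j ∈ Submodule.span ℝ U := by
      rw [← hv_span]; exact Submodule.subset_span (Set.mem_range_self j)
    have key : ∀ x ∈ Submodule.span ℝ U, (M * D + T).mulVec x i = 0 := by
      intro x hx
      induction hx using Submodule.span_induction with
      | mem y hy => exact hclaim y hy i hri
      | zero => simp
      | add y z hy hz ihy ihz => simp [Matrix.mulVec_add, ihy, ihz]
      | smul a y hy ih => simp [Matrix.mulVec_smul, ih]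
    exact key _ hvj
  · rintro ⟨h1, h2⟩ u hu
    refine ⟨hz_nonneg u hu, hw_nonneg u hu, ?_⟩
    have hz0 : ∀ i, 0 ≤ r i := by
      intro i; have := hz_nonneg 0 h0U i; simpa using this
    have hMDT : ∀ i, 0 < r i → (M * D + T).mulVec u i = 0 := by
      intro i hri
      have huspan : u ∈ Submodule.span ℝ (Set.range v) := by
        rw [hv_span]; exact Submodule.subset_span hu
      have key : ∀ x ∈ Submodule.span ℝ (Set.range v), (M * D + T).mulVec x i = 0 := by
        intro x hx
        induction hx using Submodule.span_induction with
        | mem y hy => obtain ⟨j, rfl⟩ := hy; exact h2 j i hri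
        | zero => simp
        | add y z hy hz ihy ihz => simp [Matrix.mulVec_add, ihy, ihz]
        | smul a y hy ih => simp [Matrix.mulVec_smul, ih]
      exact key _ huspan
    apply Finset.sum_eq_zero
    intro i _
    rcases (hz0 i).lt_or_eq with hri | hri
    · -- w_i = 0
      have hw0 : (M.mulVec (D.mulVec u + r) + q + T.mulVec u) i = 0 := by
        have hexp : (M.mulVec (D.mulVec u + r) + q + T.mulVec u) i
            = (M * D + T).mulVec u i + (M.mulVec r i + q i) := by
          simp [Matrix.mulVec_add, Matrix.add_mulVec, ← Matrix.mulVec_mulVec]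
          ring
        rw [hexp, hMDT i hri, h1 i hri]; ring
      simp [hw0]
    · -- z_i = 0
      obtain ⟨ε, hε, hεu⟩ := neg_smul_mem_of_intrinsicInterior h0 hu
      have h1' : 0 ≤ (D.mulVec u) i + r i := by
        have := hz_nonneg u hu i; simpa using this
      have h2' : 0 ≤ -ε * (D.mulVec u) i + r i := by
        have := hz_nonneg _ hεu i
        rw [Pi.add_apply, Matrix.mulVec_smul, Pi.smul_apply, smul_eq_mul] at this
        exact this
      have hz0' : (D.mulVec u + r) i = 0 := by
        simp only [Pi.add_apply]
        rw [← hri] at h1' h2' ⊢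
        nlinarith
      simp [hz0']
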